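/- For each integer l ≥ 2, let T_l be the tree obtained from two paths P^{(1)}, P^{(2)} each on three vertices and a path P^{(3)} of length l by identifying one endpoint of P^{(3)} with the internal vertex of P^{(1)} and the other endpoint of P^{(3)} with the internal vertex of P^{(2)}. Then for all integers 2 ≤ l < l', T_l is a minor of T_{l'} but T_l is not a bipartite minor of T_{l'}. In particular, there exist infinitely many pairs of bipartite graphs (G, H) such that H is a minor of G but not a bipartite minor of G. -/

import Mathlib

open SimpleGraph

/-- Finite simple graphs are modelled as subgraphs of the complete graph on `ℕ`. -/
abbrev FG : Type := SimpleGraph.Subgraph (⊤ : SimpleGraph ℕ)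

/-- Build a graph from a vertex set and a (not necessarily symmetric) edge description. -/
def ofRel (V : Set ℕ) (r : ℕ → ℕ → Prop) : FG where
  verts := V
  Adj x y := x ≠ y ∧ x ∈ V ∧ y ∈ V ∧ (r x y ∨ r y x)
  adj_sub := fun h => (SimpleGraph.top_adj _ _).mpr h.1
  edge_vert := fun h => h.2.1
  symm := ⟨fun _ _ h => ⟨h.1.symm, h.2.2.1, h.2.1, h.2.2.2.symm⟩⟩

/-- The cycle `C_n` on `n` vertices. -/
def cycleFG (n : ℕ) : FG := ofRel {x | x < n} (fun i j => j = (i + 1) % n)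

/-- The path `P_n` on `n` vertices. -/
def pathFG (n : ℕ) : FG := ofRel {x | x < n} (fun i j => j = i + 1)

/-- The bull `B(l, l1)`: a cycle (snout) of length `l` on `0,…,l-1`, together with a horn,
namely a path on the `l1` vertices `l,…,l+l1-1` joined by an edge to the snout vertex `0`. -/
def bullFG (l l1 : ℕ) : FG :=
  ofRel {x | x < l + l1}
    (fun i j => (i < l ∧ j = (i + 1) % l) ∨ (l ≤ i ∧ j = i + 1 ∧ j < l + l1) ∨ (i = 0 ∧ j = l))

/-- The one-eared dog `D(l, l1)`: a snout cycle of length `l` on `0,…,l-1` together with an ear,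
namely a cycle of length `l1` sharing the snout edge `{0,1}` (its `l1 - 2` new vertices
are `l,…,l+l1-3`). -/
def dog1FG (l l1 : ℕ) : FG :=
  ofRel {x | x < l + l1 - 2}
    (fun i j => (i < l ∧ j = (i + 1) % l) ∨ (i = 1 ∧ j = l) ∨
      (l ≤ i ∧ j = i + 1 ∧ j ≤ l + l1 - 3) ∨ (i = l + l1 - 3 ∧ j = 0))

/-- The two-eared dog `D(l, l1, l2)`: a snout cycle of length `l` on `0,…,l-1` together with
an ear of length `l1` sharing the snout edge `{0,1}` (new vertices `l,…,l+l1-3`) and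
an ear of length `l2` sharing the snout edge `{2,3}` (new vertices `l+l1-2,…,l+l1+l2-5`),
so the ears are attached at the consecutive snout vertices `0,1,2,3`. -/
def dog2FG (l l1 l2 : ℕ) : FG :=
  ofRel {x | x < l + l1 + l2 - 4}
    (fun i j => (i < l ∧ j = (i + 1) % l) ∨ (i = 1 ∧ j = l) ∨
      (l ≤ i ∧ j = i + 1 ∧ j ≤ l + l1 - 3) ∨ (i = l + l1 - 3 ∧ j = 0) ∨
      (i = 3 ∧ j = l + l1 - 2) ∨ (l + l1 - 2 ≤ i ∧ j = i + 1 ∧ j ≤ l + l1 + l2 - 5) ∨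
      (i = l + l1 + l2 - 5 ∧ j = 2))

/-- The tree `T_l`: a path `0,…,l` of length `l` (i.e. on `l+1` vertices), with the two extra
leaves `l+1, l+2` attached to the endpoint `0` and the two extra leaves `l+3, l+4` attached to
the endpoint `l`.  (Equivalently: obtained from two paths on three vertices and a path of
length `l` by identifying the endpoints of the latter with the internal vertices of the
former two.) -/
def treeFG (l : ℕ) : FG :=
  ofRel {x | x < l + 5}
    (fun i j => (j = i + 1 ∧ j ≤ l) ∨ (i = 0 ∧ (j = l + 1 ∨ j = l + 2)) ∨
      (i = l ∧ (j = l + 3 ∨ j = l + 4)))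

/-- The contraction of the vertices `u` and `v` in `H`: the two vertices are identified
(the merged vertex keeps the label `u`); the merged vertex is adjacent to every neighbour of
`u` or `v`. -/
def contractFG (H : FG) (u v : ℕ) : FG where
  verts := H.verts \ {v}
  Adj x y := x ≠ y ∧ x ≠ v ∧ y ≠ v ∧
    (H.Adj x y ∨ (x = u ∧ u ∈ H.verts ∧ H.Adj v y) ∨ (y = u ∧ u ∈ H.verts ∧ H.Adj x v))
  adj_sub := fun h => (SimpleGraph.top_adj _ _).mpr h.1
  edge_vert := by
    rintro x y ⟨hxy, hxv, hyv, h | ⟨rfl, hu, h⟩ | ⟨h1, h2, h3⟩⟩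
    · exact ⟨H.edge_vert h, hxv⟩
    · exact ⟨hu, hxv⟩
    · exact ⟨H.edge_vert h3, hxv⟩
  symm := by
    constructor
    rintro x y ⟨hxy, hxv, hyv, h | ⟨h1, h2, h3⟩ | ⟨h1, h2, h3⟩⟩
    · exact ⟨hxy.symm, hyv, hxv, Or.inl h.symm⟩
    · exact ⟨hxy.symm, hyv, hxv, Or.inr (Or.inr ⟨h1, h2, h3.symm⟩)⟩
    · exact ⟨hxy.symm, hyv, hxv, Or.inr (Or.inl ⟨h1, h2, h3.symm⟩)⟩

/-- The number of connected components of a graph. -/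
noncomputable def ncompFG (H : FG) : ℕ := Nat.card H.coe.ConnectedComponent

/-- `C` is the vertex set of an induced cycle of `H`: it is a finite set of vertices of `H`
whose induced subgraph is connected and `2`-regular, i.e. is exactly a cycle (in particular
the cycle has no chord). -/
def IsInducedCycleFG (H : FG) (C : Set ℕ) : Prop :=
  C ⊆ H.verts ∧ C.Finite ∧ 3 ≤ C.ncard ∧ ((H.induce C).coe).Connected ∧
    ∀ x ∈ C, {y | y ∈ C ∧ H.Adj x y}.ncard = 2

/-- The cycle with vertex set `C` is non-separating in `H`: deleting it does not increase the
number of connected components. -/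
def NonSeparatingFG (H : FG) (C : Set ℕ) : Prop :=
  ncompFG (H.deleteVerts C) ≤ ncompFG H

/-- The contraction of `u` and `v` in `H` is admissible: `u` and `v` have a common neighbour
`w` such that the path `u, w, v` is part of an induced non-separating cycle of `H`. -/
def AdmissiblePair (H : FG) (u v : ℕ) : Prop :=
  u ≠ v ∧ ∃ w, H.Adj u w ∧ H.Adj w v ∧
    ∃ C : Set ℕ, u ∈ C ∧ w ∈ C ∧ v ∈ C ∧ IsInducedCycleFG H C ∧ NonSeparatingFG H C

/-- A single bipartite-minor operation: `BStep G H` holds when `H` is obtained from `G` by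
deleting a vertex, deleting an edge, or performing an admissible contraction. -/
inductive BStep : FG → FG → Prop
  | deleteVert (G : FG) (v : ℕ) : BStep G (G.deleteVerts {v})
  | deleteEdge (G : FG) (e : Sym2 ℕ) : BStep G (G.deleteEdges {e})
  | contract (G : FG) (u v : ℕ) (h : AdmissiblePair G u v) : BStep G (contractFG G u v)

/-- A single minor operation: `MStep G H` holds when `H` is obtained from `G` by deleting a
vertex, deleting an edge, or contracting an edge. -/
inductive MStep : FG → FG → Prop
  | deleteVert (G : FG) (v : ℕ) : MStep G (G.deleteVerts {v})
  | deleteEdge (G : FG) (e : Sym2 ℕ) : MStep G (G.deleteEdges {e})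
  | contract (G : FG) (u v : ℕ) (h : G.Adj u v) : MStep G (contractFG G u v)

/-- Two graphs are isomorphic. -/
def IsoFG (H K : FG) : Prop := Nonempty (H.coe ≃g K.coe)

/-- `H ≤_B G`: `H` is a bipartite minor of `G`, i.e. (a graph isomorphic to) `H` can be obtained
from `G` by a sequence of vertex deletions, edge deletions and admissible contractions. -/
def BipMinor (H G : FG) : Prop :=
  ∃ H' : FG, Relation.ReflTransGen BStep G H' ∧ IsoFG H' H

/-- `H ≤_M G`: `H` is a minor of `G`, i.e. (a graph isomorphic to) `H` can be obtained from `G`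
by a sequence of vertex deletions, edge deletions and edge contractions. -/
def MinorFG (H G : FG) : Prop :=
  ∃ H' : FG, Relation.ReflTransGen MStep G H' ∧ IsoFG H' H

/-- A graph is `2`-connected if deleting any set of at most one vertex leaves a connected
graph. -/
def TwoConnectedFG (H : FG) : Prop :=
  ∀ U : Set ℕ, U.Subsingleton → ((H.deleteVerts U).coe).Connected

/-- `B` is a block of `G`: a maximal `2`-connected subgraph of `G`. -/
def IsBlockFG (G B : FG) : Prop :=
  B ≤ G ∧ TwoConnectedFG B ∧ ∀ B' : FG, B ≤ B' → B' ≤ G → TwoConnectedFG B' → B' = B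

/-- A graph is bipartite iff it is `2`-colourable. -/
def BipartiteFG (H : FG) : Prop := H.coe.Colorable 2

/-- A forest is an acyclic graph. -/
def ForestFG (H : FG) : Prop := H.coe.IsAcyclic

/-- `H` is (isomorphic to) a subgraph of `G`. -/
def IsSubgraphFG (H G : FG) : Prop := ∃ S : FG, S ≤ G ∧ IsoFG S H

/-- AUX: walk length bound from a 1-Lipschitz-ish potential. -/
lemma walk_pot {V : Type*} {G : SimpleGraph V} (f : V → ℕ)
    (hf : ∀ a b, G.Adj a b → f b ≤ f a + 1) :
    ∀ {x y : V} (p : G.Walk x y), f y ≤ f x + p.length := by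
  intro x y p
  induction p with
  | nil => simp
  | cons h q ih =>
    have := hf _ _ h
    simp only [SimpleGraph.Walk.length_cons]
    omega

/-- AUX: adjacency in `treeFG`. -/
lemma treeFG_adj {l x y : ℕ} : (treeFG l).Adj x y ↔ x ≠ y ∧ x < l + 5 ∧ y < l + 5 ∧
    (((y = x + 1 ∧ y ≤ l) ∨ (x = 0 ∧ (y = l + 1 ∨ y = l + 2)) ∨ (x = l ∧ (y = l + 3 ∨ y = l + 4))) ∨
     ((x = y + 1 ∧ x ≤ l) ∨ (y = 0 ∧ (x = l + 1 ∨ x = l + 2)) ∨ (y = l ∧ (x = l + 3 ∨ x = l + 4)))) :=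
  Iff.rfl

/-- AUX: in the tree every vertex has at most one smaller neighbour. -/
lemma treeFG_smaller_nbr {l m y1 y2 : ℕ} (h1 : (treeFG l).Adj m y1) (h2 : (treeFG l).Adj m y2)
    (hy1 : y1 < m) (hy2 : y2 < m) : y1 = y2 := by
  rw [treeFG_adj] at h1 h2; omega

/-- AUX: no admissible pair in a subgraph of a tree. -/
lemma no_admissible {l : ℕ} {H : FG} (hle : H ≤ treeFG l) (u v : ℕ) :
    ¬ AdmissiblePair H u v := by
  rintro ⟨-, w, -, -, C, -, -, -, ⟨hCV, hCfin, hC3, -, hdeg⟩, -⟩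
  have hne : C.Nonempty := Set.nonempty_of_ncard_ne_zero (by omega)
  obtain ⟨m, hmC, hmax⟩ := Set.Finite.exists_maximalFor id C hCfin hne
  have h2 := hdeg m hmC
  obtain ⟨a, b, hab, hS⟩ := Set.ncard_eq_two.mp h2
  have ha : a ∈ C ∧ H.Adj m a := by rw [Set.ext_iff] at hS; exact (hS a).mpr (by simp)
  have hb : b ∈ C ∧ H.Adj m b := by rw [Set.ext_iff] at hS; exact (hS b).mpr (by simp)
  have haT : (treeFG l).Adj m a := hle.2 ha.2
  have hbT : (treeFG l).Adj m b := hle.2 hb.2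
  have ha' : a < m := by
    rcases Nat.lt_or_ge a m with h | h
    · exact h
    · exact absurd (show m = a from le_antisymm h (hmax ha.1 h)) haT.ne
  have hb' : b < m := by
    rcases Nat.lt_or_ge b m with h | h
    · exact h
    · exact absurd (show m = b from le_antisymm h (hmax hb.1 h)) hbT.ne
  exact hab (treeFG_smaller_nbr haT hbT ha' hb')

/-- AUX: anything reachable by bipartite-minor steps from the tree is a subgraph of it. -/
lemma reach_le {l : ℕ} {H' : FG} (h : Relation.ReflTransGen BStep (treeFG l) H') :
    H' ≤ treeFG l := by
  induction h with
  | refl => exact le_refl _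
  | tail hbc step ih =>
    cases step with
    | deleteVert v => exact le_trans Subgraph.deleteVerts_le ih
    | deleteEdge e => exact le_trans (Subgraph.deleteEdges_le _) ih
    | contract u v hadm => exact absurd hadm (no_admissible ih u v)

/-- AUX: a vertex of the tree with three distinct neighbours is `0` or `l`. -/
lemma treeFG_deg3 {n x a b c : ℕ} (h1 : (treeFG n).Adj x a) (h2 : (treeFG n).Adj x b)
    (h3 : (treeFG n).Adj x c) (hab : a ≠ b) (hac : a ≠ c) (hbc : b ≠ c) : x = 0 ∨ x = n := by
  rw [treeFG_adj] at h1 h2 h3; omega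

lemma treeFG_mem {l j : ℕ} (hj : j < l + 5) : j ∈ (treeFG l).verts := hj

/-- AUX: a walk of length `j` from `0` to `j` in the tree. -/
lemma tree_walk {l : ℕ} : ∀ j, (hj : j ≤ l) →
    Nonempty {p : (treeFG l).coe.Walk ⟨0, treeFG_mem (by omega)⟩ ⟨j, treeFG_mem (by omega)⟩ //
      p.length = j} := by
  intro j
  induction j with
  | zero => exact fun _ => ⟨SimpleGraph.Walk.nil, rfl⟩
  | succ n ih =>
    intro h
    obtain ⟨p, hp⟩ := ih (by omega)
    have hadj : (treeFG l).coe.Adj ⟨n, treeFG_mem (by omega)⟩ ⟨n + 1, treeFG_mem (by omega)⟩ :=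
      show (treeFG l).Adj n (n + 1) from treeFG_adj.mpr (by omega)
    exact ⟨p.concat hadj, by simp [SimpleGraph.Walk.length_concat, hp]⟩

/-- AUX: no subgraph of `treeFG l'` is isomorphic to `treeFG l` for `2 ≤ l < l'`. -/
lemma not_iso_of_le {l l' : ℕ} (h2 : 2 ≤ l) (hll : l < l') {H' : FG} (hle : H' ≤ treeFG l')
    (hiso : IsoFG H' (treeFG l)) : False := by
  obtain ⟨φ⟩ := hiso
  have hval : ∀ (x y : ↑(treeFG l).verts), (φ.symm x).val = (φ.symm y).val → x.val = y.val :=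
    fun x y h => congrArg Subtype.val (φ.symm.injective (Subtype.ext h))
  have hadj : ∀ (x y : ↑(treeFG l).verts), (treeFG l).Adj x.val y.val →
      (treeFG l').Adj (φ.symm x).val (φ.symm y).val := by
    intro x y h
    exact hle.2 (φ.symm.map_rel_iff.mpr h)
  have hA : (φ.symm ⟨0, treeFG_mem (by omega)⟩).val = 0 ∨
      (φ.symm ⟨0, treeFG_mem (by omega)⟩).val = l' := by
    refine treeFG_deg3
      (hadj _ ⟨1, treeFG_mem (by omega)⟩ (show (treeFG l).Adj 0 1 from treeFG_adj.mpr (by omega)))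
      (hadj _ ⟨l + 1, treeFG_mem (by omega)⟩
        (show (treeFG l).Adj 0 (l+1) from treeFG_adj.mpr (by omega)))
      (hadj _ ⟨l + 2, treeFG_mem (by omega)⟩
        (show (treeFG l).Adj 0 (l+2) from treeFG_adj.mpr (by omega))) ?_ ?_ ?_
    · intro h; have h' : (1:ℕ) = l + 1 := hval _ _ h; omega
    · intro h; have h' : (1:ℕ) = l + 2 := hval _ _ h; omega
    · intro h; have h' : (l+1:ℕ) = l + 2 := hval _ _ h; omega
  have hB : (φ.symm ⟨l, treeFG_mem (by omega)⟩).val = 0 ∨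
      (φ.symm ⟨l, treeFG_mem (by omega)⟩).val = l' := by
    refine treeFG_deg3
      (hadj _ ⟨l - 1, treeFG_mem (by omega)⟩
        (show (treeFG l).Adj l (l-1) from treeFG_adj.mpr (by omega)))
      (hadj _ ⟨l + 3, treeFG_mem (by omega)⟩
        (show (treeFG l).Adj l (l+3) from treeFG_adj.mpr (by omega)))
      (hadj _ ⟨l + 4, treeFG_mem (by omega)⟩
        (show (treeFG l).Adj l (l+4) from treeFG_adj.mpr (by omega))) ?_ ?_ ?_
    · intro h; have h' : (l-1:ℕ) = l + 3 := hval _ _ h; omega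
    · intro h; have h' : (l-1:ℕ) = l + 4 := hval _ _ h; omega
    · intro h; have h' : (l+3:ℕ) = l + 4 := hval _ _ h; omega
  have hAB : (φ.symm ⟨0, treeFG_mem (by omega)⟩).val ≠
      (φ.symm ⟨l, treeFG_mem (by omega)⟩).val := by
    intro h
    have h' : (0:ℕ) = l := hval _ _ h
    omega
  -- potential function on the big tree
  obtain ⟨p, hp⟩ := tree_walk l le_rfl
  set gg : ℕ → ℕ := fun j => if j ≤ l' then j else if j ≤ l' + 2 then 1 else l' - 1 with hgg
  set g : ↑(treeFG l').verts → ℕ := fun v => gg v.val with hgdef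
  have hf : ∀ a b, (treeFG l').coe.Adj a b → g b ≤ g a + 1 := by
    intro a b hab
    have : (treeFG l').Adj a.val b.val := hab
    rw [treeFG_adj] at this
    simp only [hgdef, hgg]
    split_ifs <;> omega
  set A : ↑H'.verts := φ.symm ⟨0, treeFG_mem (by omega)⟩ with hAdef
  set B : ↑H'.verts := φ.symm ⟨l, treeFG_mem (by omega)⟩ with hBdef
  have q := (p.map φ.symm.toHom).map (Subgraph.inclusion hle)
  have h1 := walk_pot g hf ((p.map φ.symm.toHom).map (Subgraph.inclusion hle))
  have h2' := walk_pot g hf ((p.map φ.symm.toHom).map (Subgraph.inclusion hle)).reverse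
  rw [SimpleGraph.Walk.length_reverse] at h2'
  rw [SimpleGraph.Walk.length_map, SimpleGraph.Walk.length_map, hp] at h1 h2'
  have eA : g (Subgraph.inclusion hle A) = gg A.val := rfl
  have eB : g (Subgraph.inclusion hle B) = gg B.val := rfl
  have hA' : (A.val = 0 ∨ A.val = l') := hA
  have hB' : (B.val = 0 ∨ B.val = l') := hB
  have hAB' : A.val ≠ B.val := hAB
  have h1' : gg B.val ≤ gg A.val + l := by
    have : g (Subgraph.inclusion hle (φ.symm.toHom ⟨l, treeFG_mem (by omega)⟩)) ≤
        g (Subgraph.inclusion hle (φ.symm.toHom ⟨0, treeFG_mem (by omega)⟩)) + l := h1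
    exact this
  have h2'' : gg A.val ≤ gg B.val + l := by
    have : g (Subgraph.inclusion hle (φ.symm.toHom ⟨0, treeFG_mem (by omega)⟩)) ≤
        g (Subgraph.inclusion hle (φ.symm.toHom ⟨l, treeFG_mem (by omega)⟩)) + l := h2'
    exact this
  have g0 : gg 0 = 0 := by simp [hgg]
  have gl' : gg l' = l' := by simp [hgg]
  rcases hA' with hA' | hA' <;> rcases hB' with hB' | hB'
  · exact hAB' (hA'.trans hB'.symm)
  · rw [hA', hB', g0, gl'] at h1'; omega
  · rw [hA', hB', g0, gl'] at h2''; omega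
  · exact hAB' (hA'.trans hB'.symm)

/-- AUX: tree with path `0,…,l` and leaves `m+1, m+2` at `0`, `m+3, m+4` at `l`. -/
def treeFG' (l m : ℕ) : FG :=
  ofRel {x | x ≤ l ∨ (m + 1 ≤ x ∧ x ≤ m + 4)}
    (fun i j => (j = i + 1 ∧ j ≤ l) ∨ (i = 0 ∧ (j = m + 1 ∨ j = m + 2)) ∨
      (i = l ∧ (j = m + 3 ∨ j = m + 4)))

lemma treeFG_eq_treeFG' (l : ℕ) : treeFG l = treeFG' l l := by
  refine Subgraph.ext ?_ ?_
  · ext x; simp only [treeFG, treeFG', ofRel, Set.mem_setOf_eq]; omega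
  · funext x y
    simp only [treeFG, treeFG', ofRel, Set.mem_setOf_eq, eq_iff_iff]
    constructor <;> (rintro ⟨h1, h2, h3, h4⟩; exact ⟨h1, by omega, by omega, by omega⟩)

lemma treeFG'_adj {l m x y : ℕ} : (treeFG' l m).Adj x y ↔ x ≠ y ∧
    (x ≤ l ∨ (m + 1 ≤ x ∧ x ≤ m + 4)) ∧ (y ≤ l ∨ (m + 1 ≤ y ∧ y ≤ m + 4)) ∧
    (((y = x + 1 ∧ y ≤ l) ∨ (x = 0 ∧ (y = m + 1 ∨ y = m + 2)) ∨ (x = l ∧ (y = m + 3 ∨ y = m + 4))) ∨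
     ((x = y + 1 ∧ x ≤ l) ∨ (y = 0 ∧ (x = m + 1 ∨ x = m + 2)) ∨ (y = l ∧ (x = m + 3 ∨ x = m + 4)))) :=
  Iff.rfl

lemma treeFG'_mem {l m x : ℕ} :
    x ∈ (treeFG' l m).verts ↔ (x ≤ l ∨ (m + 1 ≤ x ∧ x ≤ m + 4)) := Iff.rfl

lemma contract_core (k m x y : ℕ) (h2 : 1 ≤ k) (hm : k + 1 ≤ m) :
    (x ≠ y ∧ x ≠ k + 1 ∧ y ≠ k + 1 ∧
      ((x ≠ y ∧ (x ≤ k+1 ∨ (m+1 ≤ x ∧ x ≤ m+4)) ∧ (y ≤ k+1 ∨ (m+1 ≤ y ∧ y ≤ m+4)) ∧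
        (((y = x+1 ∧ y ≤ k+1) ∨ (x = 0 ∧ (y = m+1 ∨ y = m+2)) ∨ (x = k+1 ∧ (y = m+3 ∨ y = m+4))) ∨
         ((x = y+1 ∧ x ≤ k+1) ∨ (y = 0 ∧ (x = m+1 ∨ x = m+2)) ∨ (y = k+1 ∧ (x = m+3 ∨ x = m+4))))) ∨
       (x = k ∧ (k ≤ k+1 ∨ (m+1 ≤ k ∧ k ≤ m+4)) ∧
        (k+1 ≠ y ∧ (k+1 ≤ k+1 ∨ (m+1 ≤ k+1 ∧ k+1 ≤ m+4)) ∧ (y ≤ k+1 ∨ (m+1 ≤ y ∧ y ≤ m+4)) ∧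
        (((y = k+1+1 ∧ y ≤ k+1) ∨ (k+1 = 0 ∧ (y = m+1 ∨ y = m+2)) ∨ (k+1 = k+1 ∧ (y = m+3 ∨ y = m+4))) ∨
         ((k+1 = y+1 ∧ k+1 ≤ k+1) ∨ (y = 0 ∧ (k+1 = m+1 ∨ k+1 = m+2)) ∨ (y = k+1 ∧ (k+1 = m+3 ∨ k+1 = m+4)))))) ∨
       (y = k ∧ (k ≤ k+1 ∨ (m+1 ≤ k ∧ k ≤ m+4)) ∧
        (x ≠ k+1 ∧ (x ≤ k+1 ∨ (m+1 ≤ x ∧ x ≤ m+4)) ∧ (k+1 ≤ k+1 ∨ (m+1 ≤ k+1 ∧ k+1 ≤ m+4)) ∧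
        (((k+1 = x+1 ∧ k+1 ≤ k+1) ∨ (x = 0 ∧ (k+1 = m+1 ∨ k+1 = m+2)) ∨ (x = k+1 ∧ (k+1 = m+3 ∨ k+1 = m+4))) ∨
         ((x = k+1+1 ∧ x ≤ k+1) ∨ (k+1 = 0 ∧ (x = m+1 ∨ x = m+2)) ∨ (k+1 = k+1 ∧ (x = m+3 ∨ x = m+4))))))))
    ↔ (x ≠ y ∧ (x ≤ k ∨ (m+1 ≤ x ∧ x ≤ m+4)) ∧ (y ≤ k ∨ (m+1 ≤ y ∧ y ≤ m+4)) ∧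
        (((y = x+1 ∧ y ≤ k) ∨ (x = 0 ∧ (y = m+1 ∨ y = m+2)) ∨ (x = k ∧ (y = m+3 ∨ y = m+4))) ∨
         ((x = y+1 ∧ x ≤ k) ∨ (y = 0 ∧ (x = m+1 ∨ x = m+2)) ∨ (y = k ∧ (x = m+3 ∨ x = m+4))))) := by
  constructor
  · rintro ⟨hxy, hxl, hyl, H⟩
    rcases H with ⟨-, hmx, hmy, hr | hr⟩ | ⟨rfl, -, -, -, hmy, hr | hr⟩ | ⟨rfl, -, -, hmx, -, hr | hr⟩ <;>
      refine ⟨hxy, by omega, by omega, ?_⟩ <;> omega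
  · rintro ⟨hxy, hmx, hmy, hr | hr⟩
    · rcases hr with h | h | h
      · exact ⟨hxy, by omega, by omega, Or.inl ⟨hxy, by omega, by omega, by omega⟩⟩
      · exact ⟨hxy, by omega, by omega, Or.inl ⟨hxy, by omega, by omega, by omega⟩⟩
      · exact ⟨hxy, by omega, by omega, Or.inr (Or.inl ⟨by omega, by omega, by omega, by omega, by omega, by omega⟩)⟩
    · rcases hr with h | h | h
      · exact ⟨hxy, by omega, by omega, Or.inl ⟨hxy, by omega, by omega, by omega⟩⟩
      · exact ⟨hxy, by omega, by omega, Or.inl ⟨hxy, by omega, by omega, by omega⟩⟩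
      · exact ⟨hxy, by omega, by omega, Or.inr (Or.inr ⟨by omega, by omega, by omega, by omega, by omega, by omega⟩)⟩

lemma contract_treeFG' {l m : ℕ} (h2 : 2 ≤ l) (hm : l ≤ m) :
    contractFG (treeFG' l m) (l - 1) l = treeFG' (l - 1) m := by
  obtain ⟨k, rfl⟩ : ∃ k, l = k + 1 := ⟨l - 1, by omega⟩
  refine Subgraph.ext ?_ ?_
  · ext x
    simp only [contractFG, treeFG', ofRel, Set.mem_diff, Set.mem_setOf_eq,
      Set.mem_singleton_iff]
    omega
  · funext x y
    exact propext (contract_core k m x y (by omega) (by omega))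

lemma treeFG'_adj_pred {l m : ℕ} (h2 : 2 ≤ l) (hm : l ≤ m) : (treeFG' l m).Adj (l - 1) l := by
  rw [treeFG'_adj]; omega

/-- AUX: chain of contractions. -/
lemma chain_contract {m : ℕ} : ∀ k l, 2 ≤ l → l + k ≤ m →
    Relation.ReflTransGen MStep (treeFG' (l + k) m) (treeFG' l m) := by
  intro k
  induction k with
  | zero => intro l _ _; exact Relation.ReflTransGen.refl
  | succ n ih =>
    intro l hl hm
    have step : MStep (treeFG' (l + (n + 1)) m) (treeFG' (l + n) m) := by
      have h := MStep.contract (treeFG' (l + (n + 1)) m) (l + (n + 1) - 1) (l + (n + 1))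
        (treeFG'_adj_pred (by omega) (by omega))
      rwa [contract_treeFG' (by omega) (by omega), show l + (n + 1) - 1 = l + n by omega] at h
    exact Relation.ReflTransGen.head step (ih l hl (by omega))

/-- AUX: relabelling functions. -/
def treeEquivFun (l l' a : ℕ) : ℕ := if a ≤ l then a else a - l' + l
def treeEquivInv (l l' a : ℕ) : ℕ := if a ≤ l then a else a + (l' - l)

/-- AUX: relabelling equivalence on vertices. -/
def treeEquiv (l l' : ℕ) (h2 : 2 ≤ l) (hll : l < l') :
    ↑(treeFG' l l').verts ≃ ↑(treeFG l).verts where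
  toFun x := ⟨treeEquivFun l l' x.val, by
    have hx : x.val ≤ l ∨ (l' + 1 ≤ x.val ∧ x.val ≤ l' + 4) := x.2
    show treeEquivFun l l' x.val < l + 5
    unfold treeEquivFun; split_ifs <;> omega⟩
  invFun y := ⟨treeEquivInv l l' y.val, by
    have hy : y.val < l + 5 := y.2
    show treeEquivInv l l' y.val ≤ l ∨ (l' + 1 ≤ treeEquivInv l l' y.val ∧ treeEquivInv l l' y.val ≤ l' + 4)
    unfold treeEquivInv; split_ifs <;> omega⟩
  left_inv x := Subtype.ext (by
    have hx : x.val ≤ l ∨ (l' + 1 ≤ x.val ∧ x.val ≤ l' + 4) := x.2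
    show treeEquivInv l l' (treeEquivFun l l' x.val) = x.val
    unfold treeEquivFun treeEquivInv; split_ifs <;> omega)
  right_inv y := Subtype.ext (by
    have hy : y.val < l + 5 := y.2
    show treeEquivFun l l' (treeEquivInv l l' y.val) = y.val
    unfold treeEquivFun treeEquivInv; split_ifs <;> omega)

set_option maxHeartbeats 8000000 in
/-- AUX: relabelling isomorphism `treeFG' l l' ≃g treeFG l`. -/
def treeRelabel (l l' : ℕ) (h2 : 2 ≤ l) (hll : l < l') :
    (treeFG' l l').coe ≃g (treeFG l).coe where
  toEquiv := treeEquiv l l' h2 hll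
  map_rel_iff' := by
    intro a b
    have ha : a.val ≤ l ∨ (l' + 1 ≤ a.val ∧ a.val ≤ l' + 4) := a.2
    have hb : b.val ≤ l ∨ (l' + 1 ≤ b.val ∧ b.val ≤ l' + 4) := b.2
    show (treeFG l).Adj (treeEquivFun l l' a.val) (treeEquivFun l l' b.val) ↔
      (treeFG' l l').Adj a.val b.val
    rw [treeFG_adj, treeFG'_adj]
    unfold treeEquivFun
    split_ifs <;> omega

/-- AUX: `T_l` is a minor of `T_{l'}`. -/
lemma tree_minor {l l' : ℕ} (h2 : 2 ≤ l) (hll : l < l') :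
    MinorFG (treeFG l) (treeFG l') := by
  refine ⟨treeFG' l l', ?_, ⟨treeRelabel l l' h2 hll⟩⟩
  have h := chain_contract (m := l') (l' - l) l h2 (by omega)
  rw [show l + (l' - l) = l' from by omega] at h
  rw [treeFG_eq_treeFG' l']
  exact h

/-- AUX: `T_l` is not a bipartite minor of `T_{l'}`. -/
lemma tree_not_bip {l l' : ℕ} (h2 : 2 ≤ l) (hll : l < l') :
    ¬ BipMinor (treeFG l) (treeFG l') := by
  rintro ⟨H', hreach, hiso⟩
  exact not_iso_of_le h2 hll (reach_le hreach) hiso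

/-- AUX: trees are bipartite. -/
lemma tree_bipartite (m : ℕ) : BipartiteFG (treeFG m) := by
  refine ⟨SimpleGraph.Coloring.mk
    (fun v => ⟨(if v.val ≤ m then v.val else if v.val ≤ m + 2 then 1 else m + 1) % 2,
      Nat.mod_lt _ (by omega)⟩) ?_⟩
  intro v w hadj
  have h : (treeFG m).Adj v.val w.val := hadj
  rw [treeFG_adj] at h
  simp only [Ne, Fin.mk.injEq]
  split_ifs <;> omega

lemma tree_finite (m : ℕ) : (treeFG m).verts.Finite := Set.finite_Iio _

lemma tree_card (m : ℕ) : Nat.card ↑(treeFG m).verts = m + 5 := by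
  have h : (treeFG m).verts = ↑(Finset.range (m + 5)) := by
    ext x; simp [treeFG, ofRel]
  calc Nat.card ↑(treeFG m).verts = ((treeFG m).verts).ncard := rfl
    _ = (↑(Finset.range (m + 5)) : Set ℕ).ncard := by rw [h]
    _ = m + 5 := by rw [Set.ncard_coe_finset, Finset.card_range]

/-- For all integers `2 ≤ l < l'`, the tree `T_l` is a minor of `T_{l'}` but not
a bipartite minor of `T_{l'}`.  In particular, there exist infinitely many (pairwise
non-isomorphic) pairs of bipartite graphs `(G, H)` with `H` a minor but not a bipartite minor
of `G`. -/
theorem tree_minor_not_bipMinor :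
    (∀ l l' : ℕ, 2 ≤ l → l < l' →
      MinorFG (treeFG l) (treeFG l') ∧ ¬ BipMinor (treeFG l) (treeFG l')) ∧
    ∃ G H : ℕ → FG,
      (∀ n, (G n).verts.Finite ∧ (H n).verts.Finite ∧
        BipartiteFG (G n) ∧ BipartiteFG (H n) ∧
        MinorFG (H n) (G n) ∧ ¬ BipMinor (H n) (G n)) ∧
      (∀ m n, IsoFG (G m) (G n) → IsoFG (H m) (H n) → m = n) := by
  constructor
  · intro l l' h2 hll
    exact ⟨tree_minor h2 hll, tree_not_bip h2 hll⟩
  · refine ⟨fun n => treeFG (n + 3), fun n => treeFG (n + 2), ?_, ?_⟩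
    · intro n
      exact ⟨tree_finite _, tree_finite _, tree_bipartite _, tree_bipartite _,
        tree_minor (by omega) (by omega), tree_not_bip (by omega) (by omega)⟩
    · intro m n hG _
      obtain ⟨φ⟩ := hG
      have h := Nat.card_congr φ.toEquiv
      rw [tree_card, tree_card] at h
      omega
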